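/- arXiv:1002.3615 — 2 statements merged into one kernel-verified Lean document; each statement's English description precedes it below -/
import Mathlib

section
/- If Γ₁ + iΓ₂ = (ε₁+iε₂)·g₁(ε₁²+ε₂²) with g₁ real-valued and differentiable, and the ellipticities respond to shear (at γ=κ=0) according to the pure-ellipse transformation law ε_i = ε_i^S + 2γ_i(1−(ε_i^S)²) − 2γ_j ε_1^S ε_2^S (j≠i), then the condition ∂Γ₁/∂γ₁ + ∂Γ₂/∂γ₂ = 2 is equivalent to 2(2−u)g₁(u) + 4u(1−u)g₁'(u) = 2, where u = ε₁²+ε₂². -/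
/-- For `Γ₁ + iΓ₂ = (ε₁+iε₂)g₁(ε₁²+ε₂²)` with `g₁` real and differentiable, and
ellipticities responding to shear (at zero shear) by the pure-ellipse law
`∂ε₁/∂γ₁ = 2(1−ε₁²)`, `∂ε₁/∂γ₂ = ∂ε₂/∂γ₁ = −2ε₁ε₂`, `∂ε₂/∂γ₂ = 2(1−ε₂²)`,
the condition `∂Γ₁/∂γ₁ + ∂Γ₂/∂γ₂ = 2` is equivalent to the ODE
`2(2−u)g₁(u) + 4u(1−u)g₁'(u) = 2` with `u = ε₁²+ε₂²`. -/
theorem stmt10 (e1 e2 : ℝ × ℝ → ℝ) (s1 s2 : ℝ)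
    (hs1 : e1 (0, 0) = s1) (hs2 : e2 (0, 0) = s2)
    (u : ℝ) (hu : u = s1 ^ 2 + s2 ^ 2) (huI : u ∈ Set.Ioo (0:ℝ) 1)
    (g₁ g₁' : ℝ → ℝ) (hg : ∀ t, HasDerivAt g₁ (g₁' t) t)
    -- partial derivatives of the ellipticities with respect to (γ₁, γ₂) at 0
    (h11 : HasDerivAt (fun t : ℝ => e1 (t, 0)) (2 * (1 - s1 ^ 2)) 0)
    (h12 : HasDerivAt (fun t : ℝ => e1 (0, t)) (-2 * s1 * s2) 0)
    (h21 : HasDerivAt (fun t : ℝ => e2 (t, 0)) (-2 * s1 * s2) 0)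
    (h22 : HasDerivAt (fun t : ℝ => e2 (0, t)) (2 * (1 - s2 ^ 2)) 0)
    (Γ₁ Γ₂ : ℝ × ℝ → ℝ)
    (hΓ₁ : ∀ v, Γ₁ v = e1 v * g₁ (e1 v ^ 2 + e2 v ^ 2))
    (hΓ₂ : ∀ v, Γ₂ v = e2 v * g₁ (e1 v ^ 2 + e2 v ^ 2)) :
    deriv (fun t : ℝ => Γ₁ (t, 0)) 0 + deriv (fun t : ℝ => Γ₂ (0, t)) 0 = 2 ↔
      2 * (2 - u) * g₁ u + 4 * u * (1 - u) * g₁' u = 2 := by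
  have hs1' : e1 0 = s1 := hs1
  have hs2' : e2 0 = s2 := hs2
  have key : e1 (0, 0) ^ 2 + e2 (0, 0) ^ 2 = u := by rw [hs1, hs2, hu]
  have hq1 : HasDerivAt (fun t : ℝ => e1 (t, 0) ^ 2 + e2 (t, 0) ^ 2)
      (2 * s1 * (2 * (1 - s1 ^ 2)) + 2 * s2 * (-2 * s1 * s2)) 0 := by
    have h := (h11.pow 2).add (h21.pow 2)
    convert h using 1
    all_goals first | rfl | simp [hs1', hs2', hs1, hs2]
  have hq2 : HasDerivAt (fun t : ℝ => e1 (0, t) ^ 2 + e2 (0, t) ^ 2)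
      (2 * s1 * (-2 * s1 * s2) + 2 * s2 * (2 * (1 - s2 ^ 2))) 0 := by
    have h := (h12.pow 2).add (h22.pow 2)
    convert h using 1
    all_goals first | rfl | simp [hs1', hs2', hs1, hs2]
  have hg1 : HasDerivAt (fun t : ℝ => g₁ (e1 (t, 0) ^ 2 + e2 (t, 0) ^ 2))
      (g₁' u * (2 * s1 * (2 * (1 - s1 ^ 2)) + 2 * s2 * (-2 * s1 * s2))) 0 := by
    have h := (hg (e1 (0, 0) ^ 2 + e2 (0, 0) ^ 2)).comp 0 hq1
    rw [key] at h
    exact h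
  have hg2 : HasDerivAt (fun t : ℝ => g₁ (e1 (0, t) ^ 2 + e2 (0, t) ^ 2))
      (g₁' u * (2 * s1 * (-2 * s1 * s2) + 2 * s2 * (2 * (1 - s2 ^ 2)))) 0 := by
    have h := (hg (e1 (0, 0) ^ 2 + e2 (0, 0) ^ 2)).comp 0 hq2
    rw [key] at h
    exact h
  have hΓ1d : HasDerivAt (fun t : ℝ => Γ₁ (t, 0))
      (2 * (1 - s1 ^ 2) * g₁ u +
        s1 * (g₁' u * (2 * s1 * (2 * (1 - s1 ^ 2)) + 2 * s2 * (-2 * s1 * s2)))) 0 := by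
    have hfe : (fun t : ℝ => Γ₁ (t, 0)) =
        fun t : ℝ => e1 (t, 0) * g₁ (e1 (t, 0) ^ 2 + e2 (t, 0) ^ 2) := by
      funext t; exact hΓ₁ _
    rw [hfe]
    have h := h11.mul hg1
    simp only [key, hs1'] at h
    convert h using 1
    all_goals first | rfl | simp [hs1', hs1, hs2]
  have hΓ2d : HasDerivAt (fun t : ℝ => Γ₂ (0, t))
      (2 * (1 - s2 ^ 2) * g₁ u +
        s2 * (g₁' u * (2 * s1 * (-2 * s1 * s2) + 2 * s2 * (2 * (1 - s2 ^ 2))))) 0 := by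
    have hfe : (fun t : ℝ => Γ₂ (0, t)) =
        fun t : ℝ => e2 (0, t) * g₁ (e1 (0, t) ^ 2 + e2 (0, t) ^ 2) := by
      funext t; exact hΓ₂ _
    rw [hfe]
    have h := h22.mul hg2
    simp only [key, hs2'] at h
    convert h using 1
    all_goals first | rfl | simp [hs2', hs1, hs2]
  rw [hΓ1d.deriv, hΓ2d.deriv]
  subst hu
  constructor <;> intro h <;> linear_combination h
end

section
/- For a source brightness of the form f_S(a(x²+y²) + b(x²−y²) + 2cxy) with a+b > 0 and a² − b² > c², the ellipticities of the image are ε₁ = −b/a and ε₂ = −c/a. -/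
open MeasureTheory

/-- Change of variables for a determinant-one linear map on `ℝ × ℝ`. -/
lemma cov_det_one (p q r s : ℝ) (h : p * s - q * r = 1) (g : ℝ × ℝ → ℝ)
    (hg : Integrable g) :
    ∫ x : ℝ × ℝ, g (p * x.1 + q * x.2, r * x.1 + s * x.2) = ∫ x : ℝ × ℝ, g x := by
  set T : (ℝ × ℝ) →ₗ[ℝ] (ℝ × ℝ) :=
    Matrix.toLin (Module.Basis.finTwoProd ℝ) (Module.Basis.finTwoProd ℝ) !![p, q; r, s] with hT
  have hdet : LinearMap.det T = 1 := by
    rw [hT, LinearMap.det_toLin, Matrix.det_fin_two_of]; linarith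
  have hmap : Measure.map T (volume : Measure (ℝ × ℝ)) = volume := by
    rw [Measure.map_linearMap_addHaar_eq_smul_addHaar _ (by rw [hdet]; norm_num), hdet]
    simp
  have hTm : AEMeasurable T (volume : Measure (ℝ × ℝ)) :=
    (LinearMap.continuous_of_finiteDimensional T).measurable.aemeasurable
  have h2 := integral_map hTm (f := g) (by rw [hmap]; exact hg.aestronglyMeasurable)
  rw [hmap] at h2
  rw [h2]
  apply integral_congr_ae
  filter_upwards with x
  rw [hT, Matrix.toLin_finTwoProd_apply]

lemma lin_int (f1 f2 f3 : ℝ × ℝ → ℝ) (h1 : Integrable f1) (h2 : Integrable f2)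
    (h3 : Integrable f3) (α β γ : ℝ) :
    ∫ x : ℝ × ℝ, (α * f1 x + β * f2 x + γ * f3 x)
      = α * (∫ x, f1 x) + β * (∫ x, f2 x) + γ * (∫ x, f3 x) := by
  have A := integral_add (h1.const_mul α) (h2.const_mul β)
  have B := integral_add ((h1.const_mul α).add (h2.const_mul β)) (h3.const_mul γ)
  simp only [Pi.add_apply] at A B
  rw [B, A, integral_const_mul, integral_const_mul, integral_const_mul]

/-- For a brightness profile `f_S(a(x²+y²) + b(x²−y²) + 2cxy)` with `a+b > 0`
and `a² − b² > c²`, the ellipticities of the image are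
`ε₁ = (Q₁₁−Q₂₂)/(Q₁₁+Q₂₂) = −b/a` and `ε₂ = 2Q₁₂/(Q₁₁+Q₂₂) = −c/a`. -/
theorem stmt14 (fS : ℝ → ℝ) (a b c : ℝ) (hab : 0 < a + b)
    (habc : c ^ 2 < a ^ 2 - b ^ 2)
    (R : ℝ × ℝ → ℝ)
    (hR : ∀ p : ℝ × ℝ, R p = a * (p.1 ^ 2 + p.2 ^ 2) + b * (p.1 ^ 2 - p.2 ^ 2)
        + 2 * c * (p.1 * p.2))
    (h11 : Integrable (fun p : ℝ × ℝ => p.1 * p.1 * fS (R p)))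
    (h12 : Integrable (fun p : ℝ × ℝ => p.1 * p.2 * fS (R p)))
    (h22 : Integrable (fun p : ℝ × ℝ => p.2 * p.2 * fS (R p)))
    (Q₁₁ Q₁₂ Q₂₂ : ℝ)
    (hQ11 : Q₁₁ = ∫ p : ℝ × ℝ, p.1 * p.1 * fS (R p))
    (hQ12 : Q₁₂ = ∫ p : ℝ × ℝ, p.1 * p.2 * fS (R p))
    (hQ22 : Q₂₂ = ∫ p : ℝ × ℝ, p.2 * p.2 * fS (R p))
    (hQne : Q₁₁ + Q₂₂ ≠ 0) :
    (Q₁₁ - Q₂₂) / (Q₁₁ + Q₂₂) = -b / a ∧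
    2 * Q₁₂ / (Q₁₁ + Q₂₂) = -c / a := by
  have hd2 : 0 < a ^ 2 - b ^ 2 - c ^ 2 := by nlinarith [sq_nonneg c]
  have hamb : 0 < a - b := by nlinarith [sq_nonneg c]
  have ha : 0 < a := by linarith
  set d : ℝ := Real.sqrt (a ^ 2 - b ^ 2 - c ^ 2) with hd
  have hdsq : d ^ 2 = a ^ 2 - b ^ 2 - c ^ 2 := Real.sq_sqrt hd2.le
  have hdpos : 0 < d := Real.sqrt_pos.mpr hd2
  have hdne : d ≠ 0 := hdpos.ne'
  have hDne : a ^ 2 - b ^ 2 - c ^ 2 ≠ 0 := hd2.ne'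
  -- the determinant-one linear symmetry of R
  have hdet : (-c / d) * (c / d) - (-(a - b) / d) * ((a + b) / d) = 1 := by
    have h1 : (-c / d) * (c / d) - (-(a - b) / d) * ((a + b) / d)
        = (a ^ 2 - b ^ 2 - c ^ 2) / d ^ 2 := by ring
    rw [h1, hdsq, div_self hDne]
  have hRT : ∀ x : ℝ × ℝ,
      R (-c / d * x.1 + -(a - b) / d * x.2, (a + b) / d * x.1 + c / d * x.2) = R x := by
    intro x
    rw [hR, hR]
    have h1 : a * ((-c / d * x.1 + -(a - b) / d * x.2) ^ 2
          + ((a + b) / d * x.1 + c / d * x.2) ^ 2)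
        + b * ((-c / d * x.1 + -(a - b) / d * x.2) ^ 2
          - ((a + b) / d * x.1 + c / d * x.2) ^ 2)
        + 2 * c * ((-c / d * x.1 + -(a - b) / d * x.2)
          * ((a + b) / d * x.1 + c / d * x.2))
        = (a ^ 2 - b ^ 2 - c ^ 2)
          * (a * (x.1 ^ 2 + x.2 ^ 2) + b * (x.1 ^ 2 - x.2 ^ 2) + 2 * c * (x.1 * x.2))
          / d ^ 2 := by
      field_simp
      ring
    rw [h1, hdsq, mul_div_cancel_left₀ _ hDne]
  have e1 : c ^ 2 / (a ^ 2 - b ^ 2 - c ^ 2) * Q₁₁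
      + 2 * c * (a - b) / (a ^ 2 - b ^ 2 - c ^ 2) * Q₁₂
      + (a - b) ^ 2 / (a ^ 2 - b ^ 2 - c ^ 2) * Q₂₂ = Q₁₁ := by
    rw [hQ11, hQ12, hQ22,
      ← lin_int (fun p : ℝ × ℝ => p.1 * p.1 * fS (R p))
        (fun p : ℝ × ℝ => p.1 * p.2 * fS (R p))
        (fun p : ℝ × ℝ => p.2 * p.2 * fS (R p)) h11 h12 h22,
      ← cov_det_one (-c / d) (-(a - b) / d) ((a + b) / d) (c / d) hdet
        (fun p : ℝ × ℝ => p.1 * p.1 * fS (R p)) h11]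
    apply integral_congr_ae
    filter_upwards with x
    rw [hRT x, ← hdsq]
    field_simp
    ring
  have e2 : (a + b) ^ 2 / (a ^ 2 - b ^ 2 - c ^ 2) * Q₁₁
      + 2 * c * (a + b) / (a ^ 2 - b ^ 2 - c ^ 2) * Q₁₂
      + c ^ 2 / (a ^ 2 - b ^ 2 - c ^ 2) * Q₂₂ = Q₂₂ := by
    rw [hQ11, hQ12, hQ22,
      ← lin_int (fun p : ℝ × ℝ => p.1 * p.1 * fS (R p))
        (fun p : ℝ × ℝ => p.1 * p.2 * fS (R p))
        (fun p : ℝ × ℝ => p.2 * p.2 * fS (R p)) h11 h12 h22,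
      ← cov_det_one (-c / d) (-(a - b) / d) ((a + b) / d) (c / d) hdet
        (fun p : ℝ × ℝ => p.2 * p.2 * fS (R p)) h22]
    apply integral_congr_ae
    filter_upwards with x
    rw [hRT x, ← hdsq]
    field_simp
    ring
  have e3 : -(c * (a + b)) / (a ^ 2 - b ^ 2 - c ^ 2) * Q₁₁
      + -(a ^ 2 - b ^ 2 + c ^ 2) / (a ^ 2 - b ^ 2 - c ^ 2) * Q₁₂
      + -(c * (a - b)) / (a ^ 2 - b ^ 2 - c ^ 2) * Q₂₂ = Q₁₂ := by
    rw [hQ11, hQ12, hQ22,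
      ← lin_int (fun p : ℝ × ℝ => p.1 * p.1 * fS (R p))
        (fun p : ℝ × ℝ => p.1 * p.2 * fS (R p))
        (fun p : ℝ × ℝ => p.2 * p.2 * fS (R p)) h11 h12 h22,
      ← cov_det_one (-c / d) (-(a - b) / d) ((a + b) / d) (c / d) hdet
        (fun p : ℝ × ℝ => p.1 * p.2 * fS (R p)) h12]
    apply integral_congr_ae
    filter_upwards with x
    rw [hRT x, ← hdsq]
    field_simp
    ring
  have hE1 : c ^ 2 * Q₁₁ + 2 * c * (a - b) * Q₁₂ + (a - b) ^ 2 * Q₂₂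
      = (a ^ 2 - b ^ 2 - c ^ 2) * Q₁₁ := by
    field_simp at e1
    linear_combination e1
  have hE2 : (a + b) ^ 2 * Q₁₁ + 2 * c * (a + b) * Q₁₂ + c ^ 2 * Q₂₂
      = (a ^ 2 - b ^ 2 - c ^ 2) * Q₂₂ := by
    field_simp at e2
    linear_combination e2
  have hE3 : -(c * (a + b)) * Q₁₁ + -(a ^ 2 - b ^ 2 + c ^ 2) * Q₁₂ + -(c * (a - b)) * Q₂₂
      = (a ^ 2 - b ^ 2 - c ^ 2) * Q₁₂ := by
    field_simp at e3
    have h2 : (a ^ 2 - b ^ 2 - c ^ 2) ^ 2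
          * (-(c * (a + b)) * Q₁₁ + -(a ^ 2 - b ^ 2 + c ^ 2) * Q₁₂ + -(c * (a - b)) * Q₂₂)
        = (a ^ 2 - b ^ 2 - c ^ 2) ^ 2 * ((a ^ 2 - b ^ 2 - c ^ 2) * Q₁₂) := by
      linear_combination (a ^ 2 - b ^ 2 - c ^ 2) ^ 2 * e3
    exact mul_left_cancel₀ (pow_ne_zero 2 hDne) h2
  have h0u : (a ^ 2 - b ^ 2 - c ^ 2) * ((a + b) * Q₁₁ - (a - b) * Q₂₂) = 0 := by
    linear_combination (-(a + b) / 2) * hE1 + ((a - b) / 2) * hE2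
  have h0v : (a ^ 2 - b ^ 2 - c ^ 2) * (2 * a * Q₁₂ + c * (Q₁₁ + Q₂₂)) = 0 := by
    linear_combination (-a) * hE3 - (c / 2) * hE1 - (c / 2) * hE2
  have hu : (a + b) * Q₁₁ = (a - b) * Q₂₂ := by
    rcases mul_eq_zero.mp h0u with h | h
    · exact absurd h hDne
    · linarith
  have hv : 2 * a * Q₁₂ = -(c * (Q₁₁ + Q₂₂)) := by
    rcases mul_eq_zero.mp h0v with h | h
    · exact absurd h hDne
    · linarith
  constructor
  · rw [div_eq_div_iff hQne ha.ne']
    linear_combination hu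
  · rw [div_eq_div_iff hQne ha.ne']
    linear_combination hv
end
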